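/- For every real θ, d(θ) := √2 · e^{−2cos θ} / (1 + e^{−4cos θ} + 2e^{−2cos θ} cos(2 sin θ))^{3/4} satisfies d(θ) ≥ d(0) = √2 e/(1 + e²)^{3/2}; i.e. the minimum over θ ∈ [0, 2π) of d(θ) is attained at θ = 0. -/

import Mathlib

noncomputable section

/-- `d(θ) = √2 e^{-2cos θ} / (1 + e^{-4cos θ} + 2 e^{-2cos θ} cos(2 sin θ))^{3/4}`. -/
def d (θ : ℝ) : ℝ :=
  Real.sqrt 2 * Real.exp (-2 * Real.cos θ) /
    (1 + Real.exp (-4 * Real.cos θ) +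
      2 * Real.exp (-2 * Real.cos θ) * Real.cos (2 * Real.sin θ)) ^ ((3 : ℝ) / 4)

lemma sq_of_rpow32 {x : ℝ} (hx : 0 ≤ x) : (x ^ ((3:ℝ)/2)) ^ 2 = x ^ 3 := by
  rw [← Real.rpow_natCast (x ^ ((3:ℝ)/2)) 2, ← Real.rpow_mul hx]
  norm_num

lemma sq_rpow34 {x : ℝ} (hx : 0 ≤ x) : (x ^ 2) ^ ((3:ℝ)/4) = x ^ ((3:ℝ)/2) := by
  rw [← Real.rpow_natCast x 2, ← Real.rpow_mul hx]
  norm_num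

lemma key_ineq {a u : ℝ} (ha : 0 < a) (ha1 : a ≤ 1) (hau : a ≤ u) (h1 : a * u ≤ 1) :
    Real.sqrt 2 * a / (1 + a) ^ ((3:ℝ)/2) ≤ Real.sqrt 2 * u / (1 + u) ^ ((3:ℝ)/2) := by
  have hu : 0 < u := lt_of_lt_of_le ha hau
  have h1a : (0:ℝ) < 1 + a := by linarith
  have h1u : (0:ℝ) < 1 + u := by linarith
  have hpa : 0 < (1 + a) ^ ((3:ℝ)/2) := Real.rpow_pos_of_pos h1a _
  have hpu : 0 < (1 + u) ^ ((3:ℝ)/2) := Real.rpow_pos_of_pos h1u _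
  rw [div_le_div_iff₀ hpa hpu, mul_assoc, mul_assoc]
  apply mul_le_mul_of_nonneg_left _ (Real.sqrt_nonneg 2)
  have h2 : (a * (1 + u) ^ ((3:ℝ)/2)) ^ 2 ≤ (u * (1 + a) ^ ((3:ℝ)/2)) ^ 2 := by
    rw [mul_pow, mul_pow, sq_of_rpow32 h1a.le, sq_of_rpow32 h1u.le]
    have hq : 0 ≤ u + 3*a*u + a - a^2*u^2 := by nlinarith [mul_nonneg ha.le hu.le]
    nlinarith [mul_nonneg (sub_nonneg.2 hau) hq]
  exact le_of_sq_le_sq h2 (mul_nonneg hu.le hpa.le)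

lemma d_lower (θ : ℝ) :
    Real.sqrt 2 * Real.exp (-2 * Real.cos θ) /
      (1 + Real.exp (-2 * Real.cos θ)) ^ ((3:ℝ)/2) ≤ d θ := by
  set u := Real.exp (-2 * Real.cos θ) with hudef
  have hu : 0 < u := Real.exp_pos _
  have hu2 : Real.exp (-4 * Real.cos θ) = u ^ 2 := by
    rw [hudef, ← Real.exp_nat_mul]; ring_nf
  have hc1 : Real.cos (2 * Real.sin θ) ≤ 1 := Real.cos_le_one _
  have hc2 : Real.cos 2 ≤ Real.cos (2 * Real.sin θ) := by
    rw [← Real.cos_abs (2 * Real.sin θ)]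
    apply Real.cos_le_cos_of_nonneg_of_le_pi (abs_nonneg _)
      (by linarith [Real.pi_gt_three])
    calc |2 * Real.sin θ| = 2 * |Real.sin θ| := by rw [abs_mul]; norm_num
    _ ≤ 2 := by nlinarith [Real.abs_sin_le_one θ]
  have hsin2 : 0 < Real.sin 2 := Real.sin_pos_of_pos_of_lt_pi (by norm_num)
    (by linarith [Real.pi_gt_three])
  set D := 1 + Real.exp (-4 * Real.cos θ) + 2 * u * Real.cos (2 * Real.sin θ) with hD
  have hDpos : 0 < D := by
    rw [hD, hu2]
    nlinarith [Real.sin_sq_add_cos_sq 2, sq_nonneg (u + Real.cos 2)]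
  have hDle : D ≤ (1 + u) ^ 2 := by rw [hD, hu2]; nlinarith
  have h34 : D ^ ((3:ℝ)/4) ≤ (1 + u) ^ ((3:ℝ)/2) := by
    rw [← sq_rpow34 (by positivity : (0:ℝ) ≤ 1 + u)]
    exact Real.rpow_le_rpow hDpos.le hDle (by norm_num)
  have hD34 : 0 < D ^ ((3:ℝ)/4) := Real.rpow_pos_of_pos hDpos _
  unfold d
  rw [← hudef, ← hD]
  exact div_le_div_of_nonneg_left (by positivity) hD34 h34

lemma d_zero : d 0 = Real.sqrt 2 * Real.exp (-2) /
    (1 + Real.exp (-2)) ^ ((3:ℝ)/2) := by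
  unfold d
  rw [Real.cos_zero, Real.sin_zero]
  norm_num
  have h1 : Real.exp (-4) = Real.exp (-2) ^ 2 := by
    rw [← Real.exp_nat_mul]; norm_num
  have h2 : 1 + Real.exp (-4) + 2 * Real.exp (-2) = (1 + Real.exp (-2)) ^ 2 := by
    rw [h1]; ring
  rw [h2, sq_rpow34 (by positivity)]

/-- `d(θ) ≥ d(0) = √2 e / (1 + e²)^{3/2}` for all real `θ`. -/
theorem stmt_17 :
    (∀ θ : ℝ, d 0 ≤ d θ) ∧
      d 0 = Real.sqrt 2 * Real.exp 1 / (1 + Real.exp 1 ^ 2) ^ ((3 : ℝ) / 2) := by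

  constructor
  · intro θ
    rw [d_zero]
    refine le_trans ?_ (d_lower θ)
    apply key_ineq (Real.exp_pos _) (Real.exp_le_one_iff.2 (by norm_num)) ?_ ?_
    · exact Real.exp_le_exp.2 (by nlinarith [Real.cos_le_one θ])
    · rw [← Real.exp_add]
      exact Real.exp_le_one_iff.2 (by nlinarith [Real.neg_one_le_cos θ])
  · rw [d_zero]
    set E := Real.exp 1 with hE
    have hEpos : 0 < E := Real.exp_pos _
    have hae : Real.exp (-2) * E ^ 2 = 1 := by
      rw [hE, ← Real.exp_nat_mul, ← Real.exp_add]; norm_num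
    have h1 : 1 + Real.exp (-2) = (1 + E ^ 2) / E ^ 2 := by
      field_simp; nlinarith [hae]
    have hE232 : (E ^ 2) ^ ((3:ℝ)/2) = E ^ 3 := by
      rw [← Real.rpow_natCast E 2, ← Real.rpow_mul hEpos.le]
      norm_num
    have h3 : Real.exp (-2) * E ^ 3 = E := by
      rw [pow_succ, ← mul_assoc, hae, one_mul]
    rw [h1, Real.div_rpow (by positivity) (by positivity), hE232,
      div_div_eq_mul_div, mul_assoc, h3]
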